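/- arXiv:1812.08228 — 3 statements merged into one kernel-verified Lean document; each statement's English description precedes it below -/
import Mathlib

section
/- Let β ∈ ℂ with |β| > 1, let A ⊂ ℂ be finite, and let V ⊂ ℂ be a nonempty bounded set satisfying βV ⊆ ⋃_{a∈A} (V + a). Then every x ∈ V admits a representation x = ∑_{i=1}^∞ a_i β^{-i} with all a_i ∈ A. -/
/-- Thurston's construction: if `V` is nonempty, bounded and `βV ⊆ ⋃_{a ∈ A} (V + a)`,
then every `x ∈ V` has a representation `x = ∑_{i=1}^∞ a_i β^{-i}` with `a_i ∈ A`. -/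
theorem stmt_3 (β : ℂ) (hβ : 1 < ‖β‖) (A : Finset ℂ)
    (V : Set ℂ) (hVne : V.Nonempty) (hVbd : Bornology.IsBounded V)
    (hcov : (fun y => β * y) '' V ⊆ ⋃ a ∈ A, (fun y => y + a) '' V) :
    ∀ x ∈ V, ∃ a : ℕ → ℂ, (∀ i, a i ∈ A) ∧
      HasSum (fun i : ℕ => a i * (β ^ (i + 1))⁻¹) x := by
  intro x hx
  have hβ0 : β ≠ 0 := by
    intro h; rw [h] at hβ; simp at hβ; linarith
  have key : ∀ y : {y // y ∈ V}, ∃ p : ℂ × {y // y ∈ V},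
      p.1 ∈ A ∧ β * (y : ℂ) = (p.2 : ℂ) + p.1 := by
    rintro ⟨y, hy⟩
    have := hcov ⟨y, hy, rfl⟩
    simp only [Set.mem_iUnion, Set.mem_image] at this
    obtain ⟨a, ha, z, hz, hza⟩ := this
    exact ⟨⟨a, ⟨z, hz⟩⟩, ha, hza.symm⟩
  choose step hstepA hstepEq using key
  let seq : ℕ → {y // y ∈ V} := fun n => (fun y => (step y).2)^[n] ⟨x, hx⟩
  have hseq : ∀ n, seq (n + 1) = (step (seq n)).2 := fun n =>
    Function.iterate_succ_apply' _ n _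
  set a : ℕ → ℂ := fun n => (step (seq n)).1 with ha_def
  refine ⟨a, fun i => hstepA _, ?_⟩
  -- key identity
  have hid : ∀ n, x = (∑ i ∈ Finset.range n, a i * (β ^ (i + 1))⁻¹)
      + (β ^ n)⁻¹ * (seq n : ℂ) := by
    intro n
    induction n with
    | zero => simp [seq]
    | succ n ih =>
      rw [Finset.sum_range_succ, ih]
      have heq : β * (seq n : ℂ) = (seq (n + 1) : ℂ) + a n := by
        rw [hseq n]; exact hstepEq (seq n)
      have : (seq n : ℂ) = β⁻¹ * ((seq (n + 1) : ℂ) + a n) := by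
        field_simp
        linear_combination heq
      rw [this]
      field_simp
      ring
  obtain ⟨C, hC⟩ := hVbd.exists_norm_le
  -- summable
  have hβn : ∀ n : ℕ, ‖(β ^ n)⁻¹‖ = (‖β‖)⁻¹ ^ n := by
    intro n
    rw [norm_inv, norm_pow, inv_pow]
  have hr0 : 0 ≤ (‖β‖)⁻¹ := by positivity
  have hr1 : (‖β‖)⁻¹ < 1 := by
    rw [inv_lt_one_iff₀]; right; exact hβ
  obtain ⟨M, hM0, hM⟩ : ∃ M, 0 ≤ M ∧ ∀ b ∈ A, ‖b‖ ≤ M := by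
    obtain ⟨M, hM⟩ := (A.image (fun b => ‖b‖)).exists_le
    refine ⟨max M 0, le_max_right _ _, fun b hb => ?_⟩
    exact le_trans (hM _ (Finset.mem_image_of_mem _ hb)) (le_max_left _ _)
  have hsummable : Summable (fun i : ℕ => a i * (β ^ (i + 1))⁻¹) := by
    have hg : Summable (fun i : ℕ => M * (‖β‖)⁻¹ ^ (i + 1)) := by
      have : Summable (fun i : ℕ => (‖β‖)⁻¹ ^ i) :=
        summable_geometric_of_lt_one hr0 hr1
      simpa [pow_succ, mul_comm, mul_assoc, mul_left_comm] using
        ((this.mul_left M).mul_left (‖β‖)⁻¹)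
    apply Summable.of_norm
    refine Summable.of_nonneg_of_le (fun i => norm_nonneg _) (fun i => ?_) hg
    rw [norm_mul, hβn]
    exact mul_le_mul_of_nonneg_right (hM _ (hstepA _)) (by positivity)
  rw [hsummable.hasSum_iff_tendsto_nat]
  have htail : Filter.Tendsto (fun n : ℕ => (β ^ n)⁻¹ * (seq n : ℂ))
      Filter.atTop (nhds 0) := by
    refine squeeze_zero_norm (a := fun n => C * (‖β‖)⁻¹ ^ n) ?_ ?_
    · intro n
      rw [norm_mul, hβn]
      calc (‖β‖)⁻¹ ^ n * ‖(seq n : ℂ)‖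
          ≤ (‖β‖)⁻¹ ^ n * C :=
            mul_le_mul_of_nonneg_left (hC _ (seq n).2) (by positivity)
        _ = C * (‖β‖)⁻¹ ^ n := mul_comm _ _
    · simpa using (tendsto_pow_atTop_nhds_zero_of_lt_one hr0 hr1).const_mul C
  have : (fun n : ℕ => ∑ i ∈ Finset.range n, a i * (β ^ (i + 1))⁻¹)
      = fun n => x - (β ^ n)⁻¹ * (seq n : ℂ) := by
    funext n
    have := hid n
    linear_combination -this
  rw [this]
  simpa using (tendsto_const_nhds (x := x)).sub htail
end

section
/- Let β ∈ ℂ with |β| > 1 and let A ⊂ ℂ be finite. If 0 lies in the interior of the attractor K(β,A) = {∑_{i=1}^∞ a_i β^{-i} : a_i ∈ A} in ℂ, then the spectrum X^A(β) = {∑_{i=0}^n a_i β^i : n ∈ ℕ, a_i ∈ A} is relatively dense in ℂ, i.e., there exists R > 0 such that every ball of radius R in ℂ contains a point of X^A(β). -/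
/-- The set of all `∑_{i=1}^∞ a_i β^{-i}` with digits `a_i ∈ A`. -/
def attractor (β : ℂ) (A : Set ℂ) : Set ℂ :=
  {x | ∃ a : ℕ → ℂ, (∀ i, a i ∈ A) ∧ HasSum (fun i : ℕ => a i * (β ^ (i + 1))⁻¹) x}

/-- The spectrum `X^A(β) = {∑_{i=0}^n a_i β^i : n ∈ ℕ, a_i ∈ A}`. -/
def spectrumSet (β : ℂ) (A : Set ℂ) : Set ℂ :=
  {x | ∃ (n : ℕ) (a : ℕ → ℂ), (∀ i, a i ∈ A) ∧ x = ∑ i ∈ Finset.range (n + 1), a i * β ^ i}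

lemma attractor_norm_le (β : ℂ) (hβ : 1 < ‖β‖) (A : Set ℂ) (M : ℝ)
    (hM : ∀ a ∈ A, ‖a‖ ≤ M) {x : ℂ} (hx : x ∈ attractor β A) :
    ‖x‖ ≤ M / (‖β‖ - 1) := by
  obtain ⟨a, ha, hs⟩ := hx
  set b := ‖β‖ with hb
  have hb0 : (0 : ℝ) < b := lt_trans one_pos hβ
  have hr : b⁻¹ < 1 := by
    rw [inv_lt_one_iff₀]; right; exact hβ
  have hr0 : (0 : ℝ) ≤ b⁻¹ := by positivity
  have hgeo : HasSum (fun i : ℕ => M * b⁻¹ * b⁻¹ ^ i) (M * b⁻¹ * (1 - b⁻¹)⁻¹) :=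
    (hasSum_geometric_of_lt_one hr0 hr).mul_left _
  have hbound : ∀ i : ℕ, ‖a i * (β ^ (i + 1))⁻¹‖ ≤ M * b⁻¹ * b⁻¹ ^ i := by
    intro i
    have h1 : ‖a i * (β ^ (i + 1))⁻¹‖ = ‖a i‖ * b⁻¹ ^ (i + 1) := by
      rw [norm_mul, norm_inv, norm_pow]
      simp [inv_pow, hb]
    rw [h1, pow_succ']
    have := hM (a i) (ha i)
    have hp : (0:ℝ) ≤ b⁻¹ ^ i := by positivity
    calc ‖a i‖ * (b⁻¹ * b⁻¹ ^ i) ≤ M * (b⁻¹ * b⁻¹ ^ i) := by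
          apply mul_le_mul_of_nonneg_right this; positivity
      _ = M * b⁻¹ * b⁻¹ ^ i := by ring
  have hle : ‖∑' i, a i * (β ^ (i + 1))⁻¹‖ ≤ M * b⁻¹ * (1 - b⁻¹)⁻¹ :=
    tsum_of_norm_bounded hgeo hbound
  rw [hs.tsum_eq] at hle
  have heq : M * b⁻¹ * (1 - b⁻¹)⁻¹ = M / (b - 1) := by
    have hb1 : b - 1 ≠ 0 := by intro h; nlinarith
    have hbne : b ≠ 0 := ne_of_gt hb0
    field_simp
  rw [heq] at hle
  exact hle

/-- If `0 ∈ int K(β,A)`, then the spectrum `X^A(β)` is relatively dense in `ℂ`. -/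
theorem stmt_7 (β : ℂ) (hβ : 1 < ‖β‖) (A : Finset ℂ)
    (h0 : (0 : ℂ) ∈ interior (attractor β A)) :
    ∃ R > (0 : ℝ), ∀ z : ℂ, ∃ x ∈ spectrumSet β A, ‖z - x‖ ≤ R := by
  set b := ‖β‖ with hb
  have hb0 : (0 : ℝ) < b := lt_trans one_pos hβ
  have hβ0 : β ≠ 0 := by
    intro h; rw [h] at hb; simp [hb] at hb0
  obtain ⟨M, hMle⟩ := (A.image (fun a : ℂ => ‖a‖)).exists_le
  have hM : ∀ a ∈ (A : Set ℂ), ‖a‖ ≤ max M 0 := by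
    intro a haA
    exact le_trans (hMle _ (Finset.mem_image_of_mem _ haA)) (le_max_left _ _)
  have hb1 : (0 : ℝ) < b - 1 := by linarith
  refine ⟨(max M 0 + 1) / (b - 1), by positivity, fun z => ?_⟩
  rw [mem_interior_iff_mem_nhds, Metric.mem_nhds_iff] at h0
  obtain ⟨ε, hε, hball⟩ := h0
  obtain ⟨n, hn⟩ := pow_unbounded_of_one_lt (‖z‖ / ε) hβ
  set m := n + 1 with hmdef
  have hmono : b ^ n ≤ b ^ m := pow_le_pow_right₀ (by linarith) (Nat.le_succ n)
  have hzm : ‖z‖ < ε * b ^ m := by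
    have h1 : ‖z‖ / ε < b ^ m := lt_of_lt_of_le hn hmono
    rw [div_lt_iff₀ hε] at h1
    linarith [h1]
  have hw : (β ^ m)⁻¹ * z ∈ attractor β (A : Set ℂ) := by
    apply hball
    rw [Metric.mem_ball, dist_zero_right]
    have : ‖(β ^ m)⁻¹ * z‖ = ‖z‖ / b ^ m := by
      rw [norm_mul, norm_inv, norm_pow]
      simp [div_eq_mul_inv, mul_comm, hb]
    rw [this, div_lt_iff₀ (by positivity)]
    linarith
  obtain ⟨a, ha, hs⟩ := hw
  set f : ℕ → ℂ := fun i => a i * (β ^ (i + 1))⁻¹ with hf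
  have hz : HasSum (fun i => f i * β ^ m) z := by
    have h1 := hs.mul_right (β ^ m)
    have h2 : (β ^ m)⁻¹ * z * β ^ m = z := by
      field_simp
    rwa [h2] at h1
  set s : ℂ := ∑ i ∈ Finset.range m, f i * β ^ m with hsdef
  have hkey : ∀ i : ℕ, f (i + m) * β ^ m = a (i + m) * (β ^ (i + 1))⁻¹ := by
    intro i
    have h3 : (i + m) + 1 = (i + 1) + m := by ring
    rw [hf]
    simp only []
    rw [h3, pow_add, mul_inv]
    field_simp
  have htail : HasSum (fun i => f (i + m) * β ^ m) (z - s) := by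
    refine (hasSum_nat_add_iff (f := fun i => f i * β ^ m) m).mpr ?_
    rw [sub_add_cancel]
    exact hz
  have htail' : HasSum (fun i => a (i + m) * (β ^ (i + 1))⁻¹) (z - s) := by
    have hfun : (fun i => a (i + m) * (β ^ (i + 1))⁻¹) = fun i => f (i + m) * β ^ m :=
      funext fun i => (hkey i).symm
    rw [hfun]; exact htail
  have hmem : z - s ∈ attractor β (A : Set ℂ) := ⟨fun i => a (i + m), fun i => ha _, htail'⟩
  have hsmem : s ∈ spectrumSet β (A : Set ℂ) := by
    refine ⟨n, fun j => a (m - 1 - j), fun j => ha _, ?_⟩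
    have h4 : ∑ j ∈ Finset.range m, a (m - 1 - j) * β ^ j
        = ∑ i ∈ Finset.range m, a i * β ^ (m - 1 - i) := by
      rw [← Finset.sum_range_reflect (fun i => a i * β ^ (m - 1 - i)) m]
      apply Finset.sum_congr rfl
      intro j hj
      rw [Finset.mem_range] at hj
      congr 2
      omega
    have h5 : ∑ i ∈ Finset.range m, a i * β ^ (m - 1 - i) = s := by
      rw [hsdef]
      apply Finset.sum_congr rfl
      intro i hi
      rw [Finset.mem_range] at hi
      have h6 : m = (i + 1) + (m - 1 - i) := by omega
      rw [hf]
      simp only []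
      rw [h6, pow_add, mul_inv]
      field_simp
      ring_nf
      rw [show 1 + i + (m - 1 - i) - 1 - i = m - 1 - i by omega]
    rw [← hmdef] at *
    rw [h4, h5]
  refine ⟨s, hsmem, ?_⟩
  have := attractor_norm_le β hβ (A : Set ℂ) (max M 0) hM hmem
  rw [← hb] at this
  calc ‖z - s‖ ≤ max M 0 / (b - 1) := this
    _ ≤ (max M 0 + 1) / (b - 1) := by
        gcongr
        linarith
end

section
/- Let β be an algebraic integer of degree d all of whose Galois conjugates β' ≠ β satisfy |β'| < 1 (β is a Pisot number if β > 1 real, or together with its complex conjugate if complex), with |β| > 1. Let A ⊂ ℤ be a finite set. Then the spectrum X^A(β) = {∑_{i=0}^n a_i β^i : n ∈ ℕ, a_i ∈ A} is uniformly discrete in ℂ: there exists ε > 0 such that any two distinct elements x, y ∈ X^A(β) satisfy |x − y| ≥ ε. -/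
set_option maxHeartbeats 800000

open Polynomial IntermediateField Finset

private lemma geom_bound {r : ℝ} (h0 : 0 ≤ r) (h1 : r < 1) (n : ℕ) :
    ∑ i ∈ Finset.range n, r ^ i ≤ 1 / (1 - r) := by
  have hpos : (0:ℝ) < 1 - r := by linarith
  rw [geom_sum_eq (by linarith : r ≠ 1)]
  have heq : (r ^ n - 1) / (r - 1) = (1 - r ^ n) / (1 - r) := by
    rw [← neg_div_neg_eq]; ring_nf
  rw [heq]
  have hrn : (0:ℝ) ≤ r ^ n := pow_nonneg h0 n
  gcongr
  linarith

private lemma sum_ext (t : ℂ) (a : ℕ → ℤ) {n N : ℕ} (h : n ≤ N) :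
    ∑ i ∈ Finset.range (N+1), ((if i ≤ n then a i else 0 : ℤ) : ℂ) * t ^ i
      = ∑ i ∈ Finset.range (n+1), (a i : ℂ) * t ^ i := by
  rw [← Finset.sum_subset (Finset.range_subset_range.2 (by omega : n + 1 ≤ N + 1))]
  · exact Finset.sum_congr rfl fun i hi => by
      rw [if_pos (Nat.lt_succ_iff.mp (Finset.mem_range.mp hi))]
  · intro i hi hni
    rw [if_neg (by simp at hi hni ⊢; omega)]
    simp

private lemma one_le_prod_max {ι : Type*} (s : Finset ι) (f : ι → ℝ) :
    1 ≤ ∏ i ∈ s, max 1 (f i) := by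
  calc (1:ℝ) = ∏ _i ∈ s, 1 := (Finset.prod_const_one).symm
    _ ≤ _ := Finset.prod_le_prod (fun _ _ => zero_le_one) (fun i _ => le_max_left _ _)

/-- If `β` is an algebraic integer with `|β| > 1` all of whose Galois conjugates other
than `β` (and its complex conjugate) lie strictly inside the unit circle, then for any
finite `A ⊂ ℤ` the spectrum `X^A(β)` is uniformly discrete in `ℂ`. -/
theorem stmt_9 (β : ℂ) (hint : IsIntegral ℤ β) (hβ : 1 < ‖β‖)
    (hconj : ∀ β' : ℂ, Polynomial.aeval β' (minpoly ℚ β) = 0 →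
      β' ≠ β → β' ≠ (starRingEnd ℂ) β → ‖β'‖ < 1)
    (A : Finset ℤ) :
    ∃ ε > (0 : ℝ), ∀ x y : ℂ,
      (∃ (n : ℕ) (a : ℕ → ℤ), (∀ i, a i ∈ A) ∧
        x = ∑ i ∈ Finset.range (n + 1), (a i : ℂ) * β ^ i) →
      (∃ (m : ℕ) (b : ℕ → ℤ), (∀ i, b i ∈ A) ∧
        y = ∑ i ∈ Finset.range (m + 1), (b i : ℂ) * β ^ i) →
      x ≠ y → ε ≤ ‖x - y‖ := by
  classical
  have hβQ : IsIntegral ℚ β := hint.tower_top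
  haveI : FiniteDimensional ℚ ℚ⟮β⟯ := adjoin.finiteDimensional hβQ
  set g : ℚ⟮β⟯ := AdjoinSimple.gen ℚ β with hg
  have hgmap : algebraMap ℚ⟮β⟯ ℂ g = β := AdjoinSimple.algebraMap_gen ℚ β
  have hgint : IsIntegral ℤ g := by
    rw [← isIntegral_algebraMap_iff (algebraMap ℚ⟮β⟯ ℂ).injective, hgmap]; exact hint
  have hroot : ∀ σ : ℚ⟮β⟯ →ₐ[ℚ] ℂ, aeval (σ g) (minpoly ℚ β) = 0 := by
    intro σ
    rw [← minpoly_gen ℚ β, aeval_algHom_apply, ← hg]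
    exact (congrArg σ (minpoly.aeval ℚ g)).trans (map_zero σ)
  -- constants
  set M : ℝ := ((A.sup Int.natAbs : ℕ) : ℝ) with hMdef
  have hM0 : 0 ≤ M := Nat.cast_nonneg _
  have hMA : ∀ a ∈ A, |(a:ℝ)| ≤ M := by
    intro a ha
    have h1 : ((a.natAbs : ℕ) : ℝ) ≤ ((A.sup Int.natAbs : ℕ) : ℝ) := by
      exact_mod_cast Finset.le_sup ha
    calc |(a:ℝ)| = ((a.natAbs : ℕ) : ℝ) := by rw [Nat.cast_natAbs, Int.cast_abs]
      _ ≤ M := h1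
  set B : ℝ := 2*M + 1 with hBdef
  have hB1 : 1 ≤ B := by simp [hBdef]; linarith
  set P : ℝ := ∏ σ : ℚ⟮β⟯ →ₐ[ℚ] ℂ, max 1 (B / (1 - ‖σ g‖)) with hPdef
  have hP1 : 1 ≤ P := by
    rw [hPdef]
    exact one_le_prod_max _ _
  have hP0 : 0 < P := lt_of_lt_of_le one_pos hP1
  refine ⟨1/P, by positivity, ?_⟩
  rintro x y ⟨n, a, ha, hx⟩ ⟨m, b, hb, hy⟩ hxy
  set N := max n m with hN
  set c : ℕ → ℤ := fun i => (if i ≤ n then a i else 0) - (if i ≤ m then b i else 0) with hc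
  have hcbound : ∀ i, |(c i : ℝ)| ≤ B := by
    intro i
    have h1 : |((if i ≤ n then a i else 0 : ℤ) : ℝ)| ≤ M := by
      split
      · exact hMA _ (ha i)
      · simpa using hM0
    have h2 : |((if i ≤ m then b i else 0 : ℤ) : ℝ)| ≤ M := by
      split
      · exact hMA _ (hb i)
      · simpa using hM0
    calc |(c i : ℝ)| ≤ |((if i ≤ n then a i else 0 : ℤ) : ℝ)|
          + |((if i ≤ m then b i else 0 : ℤ) : ℝ)| := by
            rw [hc]; push_cast; exact abs_sub _ _
      _ ≤ B := by rw [hBdef]; linarith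
  have hz : x - y = ∑ i ∈ Finset.range (N+1), (c i : ℂ) * β ^ i := by
    rw [hx, hy, ← sum_ext β a (le_max_left n m), ← sum_ext β b (le_max_right n m),
        ← Finset.sum_sub_distrib]
    exact Finset.sum_congr rfl fun i _ => by rw [hc]; push_cast; ring
  set w : ℚ⟮β⟯ := ∑ i ∈ Finset.range (N+1), (c i : ℚ⟮β⟯) * g ^ i with hw
  have hσw : ∀ σ : ℚ⟮β⟯ →ₐ[ℚ] ℂ, σ w = ∑ i ∈ Finset.range (N+1), (c i : ℂ) * (σ g) ^ i := by
    intro σ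
    rw [hw, map_sum]
    exact Finset.sum_congr rfl fun i _ => by rw [map_mul, map_pow, map_intCast]
  have hσ₀ : ((IsScalarTower.toAlgHom ℚ ℚ⟮β⟯ ℂ) : ℚ⟮β⟯ →ₐ[ℚ] ℂ) g = β := by
    rw [IsScalarTower.coe_toAlgHom', hgmap]
  have hwmap : (IsScalarTower.toAlgHom ℚ ℚ⟮β⟯ ℂ) w = x - y := by
    rw [hσw, hσ₀, ← hz]
  have hwne : w ≠ 0 := by
    intro h
    apply hxy
    have := hwmap
    rw [h, map_zero] at this
    exact (sub_eq_zero.mp this.symm)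
  have hwint : IsIntegral ℤ w := by
    apply IsIntegral.sum
    intro i _
    have h1 : IsIntegral ℤ ((c i : ℚ⟮β⟯)) := by
      have h2 := isIntegral_algebraMap (R := ℤ) (A := ℚ⟮β⟯) (x := c i)
      simpa using h2
    exact h1.mul (hgint.pow i)
  -- norm is a nonzero rational integer
  obtain ⟨k, hk⟩ := IsIntegrallyClosed.isIntegral_iff.mp (Algebra.isIntegral_norm ℚ hwint)
  have hν0 : Algebra.norm ℚ w ≠ 0 := Algebra.norm_ne_zero_iff.mpr hwne
  have hk0 : k ≠ 0 := by rintro rfl; exact hν0 (by simp [← hk])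
  have hν1 : (1:ℝ) ≤ |((Algebra.norm ℚ w : ℚ) : ℝ)| := by
    rw [← hk]
    have h1 : (1:ℤ) ≤ |k| := Int.one_le_abs hk0
    have h2 : ((algebraMap ℤ ℚ) k : ℚ) = (k:ℚ) := by simp
    rw [h2]
    exact_mod_cast h1
  have hmain : (1:ℝ) ≤ ∏ σ : ℚ⟮β⟯ →ₐ[ℚ] ℂ, ‖σ w‖ := by
    have hprod : ‖algebraMap ℚ ℂ (Algebra.norm ℚ w)‖
        = ∏ σ : ℚ⟮β⟯ →ₐ[ℚ] ℂ, ‖σ w‖ := by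
      rw [Algebra.norm_eq_prod_embeddings ℚ ℂ w, norm_prod]
    have habs : ‖algebraMap ℚ ℂ (Algebra.norm ℚ w)‖
        = |((Algebra.norm ℚ w : ℚ) : ℝ)| := by
      rw [eq_ratCast (algebraMap ℚ ℂ), show ((Algebra.norm ℚ w : ℚ) : ℂ)
        = (((Algebra.norm ℚ w : ℚ) : ℝ) : ℂ) by push_cast; ring, Complex.norm_real, Real.norm_eq_abs]
    rw [← hprod, habs]
    exact hν1
  -- split product into "bad" (conjugates of modulus ≥ 1) and "good" embeddings
  set bad := Finset.univ.filter (fun σ : ℚ⟮β⟯ →ₐ[ℚ] ℂ => ¬ ‖σ g‖ < 1) with hbaddef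
  set good := Finset.univ.filter (fun σ : ℚ⟮β⟯ →ₐ[ℚ] ℂ => ‖σ g‖ < 1) with hgooddef
  have hsplit : (∏ σ ∈ good, ‖σ w‖) * (∏ σ ∈ bad, ‖σ w‖)
      = ∏ σ : ℚ⟮β⟯ →ₐ[ℚ] ℂ, ‖σ w‖ :=
    Finset.prod_filter_mul_prod_filter_not Finset.univ _ _
  have hbadval : ∀ σ ∈ bad, ‖σ w‖ = ‖x - y‖ := by
    intro σ hσ
    have h1 : ¬ ‖σ g‖ < 1 := (Finset.mem_filter.mp hσ).2
    by_cases hβ' : σ g = β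
    · rw [hσw, hβ', ← hz]
    by_cases hβ'' : σ g = (starRingEnd ℂ) β
    · rw [hσw, hβ'']
      have hcsum : ∑ i ∈ Finset.range (N+1), (c i : ℂ) * ((starRingEnd ℂ) β) ^ i
          = (starRingEnd ℂ) (x - y) := by
        rw [hz, map_sum]
        exact (Finset.sum_congr rfl fun i _ => by rw [map_mul, map_pow, map_intCast]).symm
      rw [hcsum, Complex.norm_conj]
    · exact absurd (hconj _ (hroot σ) hβ' hβ'') h1
  have hbadprod : ∏ σ ∈ bad, ‖σ w‖ = ‖x - y‖ ^ bad.card := by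
    rw [Finset.prod_congr rfl hbadval, Finset.prod_const]
  have hσ₀bad : (IsScalarTower.toAlgHom ℚ ℚ⟮β⟯ ℂ) ∈ bad := by
    rw [hbaddef, Finset.mem_filter]
    exact ⟨Finset.mem_univ _, by rw [hσ₀]; exact not_lt.mpr hβ.le⟩
  have hcard : 1 ≤ bad.card := Finset.card_pos.mpr ⟨_, hσ₀bad⟩
  have hgoodbound : ∏ σ ∈ good, ‖σ w‖ ≤ P := by
    calc ∏ σ ∈ good, ‖σ w‖
        ≤ ∏ σ ∈ good, max 1 (B / (1 - ‖σ g‖)) := by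
          apply Finset.prod_le_prod (fun _ _ => norm_nonneg _)
          intro σ hσ
          have hlt : ‖σ g‖ < 1 := (Finset.mem_filter.mp hσ).2
          have hpos : (0:ℝ) < 1 - ‖σ g‖ := by linarith
          refine le_trans ?_ (le_max_right _ _)
          rw [hσw]
          calc ‖∑ i ∈ Finset.range (N+1), (c i : ℂ) * (σ g) ^ i‖
              ≤ ∑ i ∈ Finset.range (N+1), ‖(c i : ℂ) * (σ g) ^ i‖ :=
                norm_sum_le _ _
            _ ≤ ∑ i ∈ Finset.range (N+1), B * ‖σ g‖ ^ i := by
                apply Finset.sum_le_sum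
                intro i _
                rw [norm_mul, norm_pow]
                apply mul_le_mul_of_nonneg_right ?_ (pow_nonneg (norm_nonneg _) i)
                rw [show ((c i : ℂ)) = (((c i : ℤ) : ℝ) : ℂ) by push_cast; ring,
                  Complex.norm_real, Real.norm_eq_abs]
                exact hcbound i
            _ = B * ∑ i ∈ Finset.range (N+1), ‖σ g‖ ^ i := by
                rw [Finset.mul_sum]
            _ ≤ B * (1 / (1 - ‖σ g‖)) := by
                apply mul_le_mul_of_nonneg_left
                  (geom_bound (norm_nonneg _) hlt _) (by linarith)
            _ = B / (1 - ‖σ g‖) := by ring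
      _ ≤ P := by
          rw [hPdef, hgooddef]
          calc ∏ σ ∈ Finset.univ.filter (fun σ : ℚ⟮β⟯ →ₐ[ℚ] ℂ => ‖σ g‖ < 1),
                max 1 (B / (1 - ‖σ g‖))
              ≤ (∏ σ ∈ Finset.univ.filter (fun σ : ℚ⟮β⟯ →ₐ[ℚ] ℂ => ‖σ g‖ < 1),
                  max 1 (B / (1 - ‖σ g‖)))
                * ∏ σ ∈ Finset.univ.filter (fun σ : ℚ⟮β⟯ →ₐ[ℚ] ℂ => ¬ ‖σ g‖ < 1),
                  max 1 (B / (1 - ‖σ g‖)) :=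
                le_mul_of_one_le_right
                  (Finset.prod_nonneg fun σ _ => le_trans zero_le_one (le_max_left _ _))
                  (one_le_prod_max _ _)
            _ = ∏ σ : ℚ⟮β⟯ →ₐ[ℚ] ℂ, max 1 (B / (1 - ‖σ g‖)) :=
                Finset.prod_filter_mul_prod_filter_not Finset.univ _ _
  have key : (1:ℝ) ≤ P * ‖x - y‖ ^ bad.card := by
    calc (1:ℝ) ≤ ∏ σ : ℚ⟮β⟯ →ₐ[ℚ] ℂ, ‖σ w‖ := hmain
      _ = (∏ σ ∈ good, ‖σ w‖) * (∏ σ ∈ bad, ‖σ w‖) := hsplit.symm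
      _ = (∏ σ ∈ good, ‖σ w‖) * ‖x - y‖ ^ bad.card := by
          rw [hbadprod]
      _ ≤ P * ‖x - y‖ ^ bad.card := by
          apply mul_le_mul_of_nonneg_right hgoodbound
            (pow_nonneg (norm_nonneg _) _)
  rcases le_or_gt 1 (‖x - y‖) with h | h
  · calc 1/P ≤ 1 := by rw [div_le_one hP0]; exact hP1
      _ ≤ _ := h
  · have h2 : ‖x - y‖ ^ bad.card ≤ ‖x - y‖ := by
      calc ‖x - y‖ ^ bad.card ≤ ‖x - y‖ ^ 1 :=
            pow_le_pow_of_le_one (norm_nonneg _) h.le hcard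
        _ = ‖x - y‖ := pow_one _
    have h3 : (1:ℝ) ≤ P * ‖x - y‖ :=
      le_trans key (mul_le_mul_of_nonneg_left h2 hP0.le)
    rw [div_le_iff₀ hP0]
    linarith [h3, mul_comm P (‖x - y‖)]
end
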